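/- arXiv:2407.03186 — 3 statements merged into one kernel-verified Lean document; each statement's English description precedes it below -/
import Mathlib

section
/- Assume B is an integer I × I matrix with b_{kk} = 0. Define x'_i ∈ K by x'_i = x_i for i ≠ k, and x'_k = x_k^{−1} · (∏_{i∈I} x_i^{[b_{ik}]_+} + ∏_{j∈I} x_j^{[−b_{jk}]_+}). For i ∈ I set z_i = ∏_{j∈I} x_j^{b_{ji}} and z'_i = ∏_{j∈I} (x'_j)^{μ_k(B)_{ji}}, where all powers are integer powers of nonzero elements of K (x'_k ≠ 0 and 1 + z_k ≠ 0 in K). Then z'_k = z_k^{−1}, and for every i ≠ k one has z'_i = z_i · z_k^{[b_{ki}]_+} · (1 + z_k)^{−b_{ki}}. -/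
/-!
STATEMENT 5: Assume B is an integer I × I matrix with b_{kk} = 0. Define x'_i ∈ K by
x'_i = x_i for i ≠ k, and x'_k = x_k^{−1} · (∏_{i∈I} x_i^{[b_{ik}]_+} + ∏_{j∈I} x_j^{[−b_{jk}]_+}).
For i ∈ I set z_i = ∏_{j∈I} x_j^{b_{ji}} and z'_i = ∏_{j∈I} (x'_j)^{μ_k(B)_{ji}}.
Then z'_k = z_k^{−1}, and for every i ≠ k one has
z'_i = z_i · z_k^{[b_{ki}]_+} · (1 + z_k)^{−b_{ki}}.

Here K is the field of fractions of the Laurent polynomial ring ℚ[x_i^{±1} : i ∈ I]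
(modeled as the group algebra of ℤ^I over ℚ), and x_i are its variables.
-/

noncomputable section

/-- The Laurent polynomial ring ℚ[x_i^{±1} : i ∈ I]. -/
abbrev LaurentRing (I : Type*) := AddMonoidAlgebra ℚ (I → ℤ)

instance (I : Type*) : IsDomain (LaurentRing I) := NoZeroDivisors.to_isDomain _

/-- The field of fractions K of the Laurent polynomial ring. -/
abbrev LaurentField (I : Type*) := FractionRing (LaurentRing I)

/-- The variable x_i, regarded as a (nonzero) element of K. -/
def xvar {I : Type*} [DecidableEq I] (i : I) : LaurentField I :=
  algebraMap (LaurentRing I) (LaurentField I) (AddMonoidAlgebra.single (Pi.single i 1) 1)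

/-- The mutated matrix μ_k(B): `μ_k(B)_{ij} = −b_{ij}` if `i = k` or `j = k`, and
`μ_k(B)_{ij} = b_{ij} + [b_{ik}]_+·[b_{kj}]_+ − [−b_{ik}]_+·[−b_{kj}]_+` otherwise. -/
def mutate {I : Type*} [DecidableEq I] (B : Matrix I I ℤ) (k : I) : Matrix I I ℤ :=
  Matrix.of fun i j =>
    if i = k ∨ j = k then -B i j
    else B i j + max (B i k) 0 * max (B k j) 0 - max (-B i k) 0 * max (-B k j) 0

def mexp {I : Type*} (v : I → ℤ) : LaurentField I :=
  algebraMap (LaurentRing I) (LaurentField I) (AddMonoidAlgebra.single v 1)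

lemma mexp_mul {I : Type*} (v w : I → ℤ) : mexp v * mexp w = mexp (v + w) := by
  simp [mexp, ← map_mul, AddMonoidAlgebra.single_mul_single]

lemma mexp_zero {I : Type*} : mexp (0 : I → ℤ) = 1 := by
  simp [mexp, ← AddMonoidAlgebra.one_def]

lemma mexp_ne_zero {I : Type*} (v : I → ℤ) : mexp (I := I) v ≠ 0 := by
  intro h
  have h2 : algebraMap (LaurentRing I) (LaurentField I) (AddMonoidAlgebra.single v (1:ℚ)) =
      algebraMap (LaurentRing I) (LaurentField I) 0 := by rw [map_zero]; exact h
  have h3 := IsFractionRing.injective (LaurentRing I) (LaurentField I) h2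
  exact one_ne_zero (AddMonoidAlgebra.single_eq_zero.mp h3)

lemma mexp_inv {I : Type*} (v : I → ℤ) : (mexp (I := I) v)⁻¹ = mexp (-v) :=
  inv_eq_of_mul_eq_one_right (by rw [mexp_mul, add_neg_cancel, mexp_zero])

lemma mexp_zpow {I : Type*} (v : I → ℤ) (n : ℤ) : mexp (I := I) v ^ n = mexp (n • v) := by
  induction n using Int.induction_on with
  | zero => simpa using (mexp_zero (I := I)).symm
  | succ m ih =>
      rw [zpow_add_one₀ (mexp_ne_zero v), ih, mexp_mul]
      congr 1; module
  | pred m ih =>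
      rw [zpow_sub_one₀ (mexp_ne_zero v), ih, mexp_inv, mexp_mul]
      congr 1; module

lemma mexp_prod {I : Type*} (s : Finset I) (f : I → (I → ℤ)) :
    ∏ j ∈ s, mexp (f j) = mexp (∑ j ∈ s, f j) := by
  induction s using Finset.cons_induction with
  | empty => simpa using (mexp_zero (I := I)).symm
  | cons a s ha ih => rw [Finset.prod_cons, ih, mexp_mul, Finset.sum_cons]

lemma xvar_eq {I : Type*} [DecidableEq I] (i : I) : xvar i = mexp (Pi.single i 1) := rfl

lemma prod_xpow {I : Type*} [Fintype I] [DecidableEq I] (c : I → ℤ) :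
    ∏ j : I, xvar j ^ c j = mexp c := by
  have h : ∀ j : I, xvar j ^ c j = mexp (c j • Pi.single j 1) := fun j => by
    rw [xvar_eq, mexp_zpow]
  rw [Finset.prod_congr rfl (fun j _ => h j), mexp_prod]
  congr 1
  funext l
  simp [Finset.sum_apply, Pi.single_apply, mul_ite, Finset.sum_ite_eq]



lemma key_ineq (a b : ℤ) :
    -b * max (-a) 0 + (max a 0 * max b 0 - max (-a) 0 * max (-b) 0) = max b 0 * a := by
  rcases le_total a 0 with ha | ha <;> rcases le_total b 0 with hb | hb
  · rw [max_eq_right ha, max_eq_right hb, max_eq_left (by omega : (0:ℤ) ≤ -a),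
      max_eq_left (by omega : (0:ℤ) ≤ -b)]; ring
  · rw [max_eq_right ha, max_eq_left hb, max_eq_left (by omega : (0:ℤ) ≤ -a),
      max_eq_right (by omega : -b ≤ (0:ℤ))]; ring
  · rw [max_eq_left ha, max_eq_right hb, max_eq_right (by omega : -a ≤ (0:ℤ)),
      max_eq_left (by omega : (0:ℤ) ≤ -b)]; ring
  · rw [max_eq_left ha, max_eq_left hb, max_eq_right (by omega : -a ≤ (0:ℤ)),
      max_eq_right (by omega : -b ≤ (0:ℤ))]; ring

theorem exchange_relation_y {I : Type*} [Fintype I] [DecidableEq I]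
    (B : Matrix I I ℤ) (k : I) (hB : B k k = 0)
    -- the mutated cluster variables x'_i
    (x' : I → LaurentField I)
    (hx'k : x' k = (xvar k)⁻¹ *
      ((∏ i : I, xvar i ^ (max (B i k) 0)) + ∏ j : I, xvar j ^ (max (-B j k) 0)))
    (hx' : ∀ i, i ≠ k → x' i = xvar i)
    -- the elements z_i and z'_i
    (z z' : I → LaurentField I)
    (hz : ∀ i, z i = ∏ j : I, xvar j ^ (B j i))
    (hz' : ∀ i, z' i = ∏ j : I, (x' j) ^ (mutate B k j i)) :
    z' k = (z k)⁻¹ ∧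
      ∀ i, i ≠ k → z' i = z i * (z k) ^ (max (B k i) 0) * (1 + z k) ^ (-(B k i)) := by
  set c : I → ℤ := fun l => B l k with hc
  set q : I → ℤ := fun l => max (-B l k) 0 with hqdef
  have hzk : z k = mexp c := by rw [hz k]; exact prod_xpow c
  -- nice form of x' k
  have hq : x' k = mexp (q - Pi.single k 1) * (1 + mexp c) := by
    rw [hx'k, prod_xpow (fun i => max (B i k) 0), prod_xpow (fun j => max (-B j k) 0),
      xvar_eq, mexp_inv, ← hqdef]
    have hpq : mexp (fun i => max (B i k) 0) = mexp q * mexp c := by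
      rw [mexp_mul]; congr 1; funext l; simp only [hqdef, hc, Pi.add_apply]; omega
    have e1 : mexp (I := I) (-Pi.single k 1) * (mexp q * mexp c)
        = mexp (q - Pi.single k 1 + c) := by
      rw [← mul_assoc, mexp_mul, mexp_mul]; congr 1; abel
    have e2 : mexp (I := I) (-Pi.single k 1) * mexp q = mexp (q - Pi.single k 1) := by
      rw [mexp_mul]; congr 1; abel
    rw [hpq, mul_add, e1, e2, mul_add, mul_one, mexp_mul, add_comm]
  constructor
  · -- z' k = (z k)⁻¹
    rw [hz' k, hzk, mexp_inv]
    have h1 : ∀ j ∈ Finset.univ, x' j ^ (mutate B k j k) = xvar j ^ (-(B j k)) := by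
      intro j _
      by_cases hj : j = k
      · subst hj; simp [mutate, hB]
      · rw [hx' j hj]; congr 1; simp [mutate]
    rw [Finset.prod_congr rfl h1, prod_xpow (fun j => -(B j k))]
    congr 1
  · intro i hi
    rw [hz' i, hz i, hzk, prod_xpow (fun j => B j i)]
    set ν : I → ℤ := fun j => if j = k then 0
      else B j i + max (B j k) 0 * max (B k i) 0 - max (-B j k) 0 * max (-B k i) 0 with hν
    have h2 : ∏ j ∈ Finset.univ.erase k, x' j ^ (mutate B k j i) = mexp ν := by
      have h3 : ∀ j ∈ Finset.univ.erase k, x' j ^ (mutate B k j i) = xvar j ^ ν j := by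
        intro j hj
        have hjk : j ≠ k := Finset.ne_of_mem_erase hj
        rw [hx' j hjk]
        congr 1
        simp [mutate, hν, hjk, hi]
      rw [Finset.prod_congr rfl h3, ← prod_xpow ν,
        ← Finset.mul_prod_erase Finset.univ (fun j => xvar j ^ ν j) (Finset.mem_univ k)]
      have : ν k = 0 := by simp [hν]
      rw [this]
      simp
    rw [← Finset.mul_prod_erase Finset.univ (fun j => x' j ^ (mutate B k j i))
      (Finset.mem_univ k), h2]
    have hmut : mutate B k k i = -(B k i) := by simp [mutate]
    rw [hmut, hq, mul_zpow, mexp_zpow]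
    rw [mexp_zpow]
    rw [mul_right_comm, mexp_mul, mexp_mul]
    congr 2
    funext l
    by_cases hl : l = k
    · subst hl
      simp only [Pi.add_apply, Pi.smul_apply, Pi.sub_apply, Pi.single_apply, if_pos rfl,
        smul_eq_mul, hν, hqdef, hc, hB, if_pos rfl]
      simp
    · simp only [Pi.add_apply, Pi.smul_apply, Pi.sub_apply, Pi.single_apply, smul_eq_mul,
        hν, hqdef, hc, if_neg hl, sub_zero]
      have := key_ineq (B l k) (B k i)
      omega
end
end

section
/- Let Θ ⊆ ℤ^I and let S = {s_g : g∈Θ} be a Θ-pointed family such that every s_g has nonnegative coefficients. Assume that for all g₁, g₂ ∈ Θ there is a finite decomposition s_{g₁}·s_{g₂} = Σ_{g∈Θ} b^g·s_g with nonnegative integer coefficients b^g. Then for every g with b^g ≠ 0: (i) supp s_g ⊆ supp s_{g₁} ∪ supp s_{g₂}; (ii) writing g = g₁ + g₂ + p*(n₀) with n₀ ∈ ℕ^{I_uf} (such n₀ exists and is unique), one has n₀ + suppDim s_g ≤ suppDim s_{g₁} + suppDim s_{g₂} coordinatewise; in particular suppDim s_g ≤ suppDim s_{g₁} + suppDim s_{g₂},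 with strict inequality in some coordinate whenever g ≠ g₁ + g₂. -/
/-! Common setup. -/

noncomputable section

namespace CAFreeze

variable {I : Type*} [Fintype I] [DecidableEq I]

/-- The Laurent polynomial ring LP = ℤ[x_i^{±1} : i ∈ I], modeled as the group algebra of
ℤ^I over ℤ. -/
abbrev LP (I : Type*) := AddMonoidAlgebra ℤ (I → ℤ)

/-- The monomial x^m for an exponent vector m ∈ ℤ^I. -/
def mono (m : I → ℤ) : LP I := AddMonoidAlgebra.ofCoeff (Finsupp.single m 1)

/-- The coefficient of the monomial x^m in z ∈ LP. -/
def coeff (z : LP I) (m : I → ℤ) : ℤ := (AddMonoidAlgebra.coeff z : (I → ℤ) →₀ ℤ) m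

variable (Iuf : Finset I) (Bt : I → {i // i ∈ Iuf} → ℤ)

/-- The linear map p* : ℤ^{I_uf} → ℤ^I, p*(n) = B̃·n. -/
def pstar (n : {i // i ∈ Iuf} → ℤ) : I → ℤ := fun i => ∑ kk : {i // i ∈ Iuf}, Bt i kk * n kk

/-- p*(n) for n ∈ ℕ^{I_uf}. -/
def pstarN (n : {i // i ∈ Iuf} → ℕ) : I → ℤ := pstar Iuf Bt fun kk => (n kk : ℤ)

/-- supp n = {k ∈ I_uf : n_k ≠ 0}, as a subset of I. -/
def suppn (n : {i // i ∈ Iuf} → ℕ) : Set I := {i | ∃ h : i ∈ Iuf, n ⟨i, h⟩ ≠ 0}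

/-- LP_{⪯m}: the ℤ-submodule of LP spanned by the monomials x^{m+p*(n)}, n ∈ ℕ^{I_uf}. -/
def LPle (m : I → ℤ) : Submodule ℤ (LP I) :=
  Submodule.span ℤ {z : LP I | ∃ n : {i // i ∈ Iuf} → ℕ, z = mono (m + pstarN Iuf Bt n)}

open Classical in
/-- The freezing operator frz_{F,m}: it keeps the monomials x^{m+p*(n)} with
supp n ∩ F = ∅ and kills the monomials x^{m+p*(n)} with supp n ∩ F ≠ ∅. -/
def frz (F : Finset I) (m : I → ℤ) (z : LP I) : LP I :=
  AddMonoidAlgebra.ofCoeff (Finsupp.filter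
    (fun e => ∃ n : {i // i ∈ Iuf} → ℕ, e = m + pstarN Iuf Bt n ∧ suppn Iuf n ∩ (F : Set I) = ∅)
      (AddMonoidAlgebra.coeff z))

/-- z ∈ LP is pointed at g: z = Σ_{n ∈ ℕ^{I_uf}} c_n x^{g+p*(n)} with c_0 = 1. -/
def Pointed (g : I → ℤ) (z : LP I) : Prop :=
  coeff z g = 1 ∧
    ∀ e ∈ (AddMonoidAlgebra.coeff z : (I → ℤ) →₀ ℤ).support, ∃ n : {i // i ∈ Iuf} → ℕ, e = g + pstarN Iuf Bt n

/-- supp z = ∪_{c_n ≠ 0} supp n, for a g-pointed z = Σ_n c_n x^{g+p*(n)}. -/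
def suppz (g : I → ℤ) (z : LP I) : Set I :=
  ⋃ n ∈ {n : {i // i ∈ Iuf} → ℕ | coeff z (g + pstarN Iuf Bt n) ≠ 0}, suppn Iuf n

/-- suppDim z ∈ ℕ^{I_uf}: the coordinatewise maximum of {n : c_n ≠ 0}, for a g-pointed
z = Σ_n c_n x^{g+p*(n)}. -/
def suppDim (g : I → ℤ) (z : LP I) : {i // i ∈ Iuf} → ℕ :=
  fun kk => sSup {d : ℕ | ∃ n : {i // i ∈ Iuf} → ℕ, coeff z (g + pstarN Iuf Bt n) ≠ 0 ∧ n kk = d}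

/-!
STATEMENT 11: Let Θ ⊆ ℤ^I and let S = {s_g : g∈Θ} be a Θ-pointed family such that every s_g
has nonnegative coefficients. Assume that for all g₁, g₂ ∈ Θ there is a finite decomposition
s_{g₁}·s_{g₂} = Σ_{g∈Θ} b^g·s_g with nonnegative integer coefficients b^g. Then for every g
with b^g ≠ 0: (i) supp s_g ⊆ supp s_{g₁} ∪ supp s_{g₂}; (ii) writing g = g₁ + g₂ + p*(n₀)
with n₀ ∈ ℕ^{I_uf} (such n₀ exists and is unique), one has
n₀ + suppDim s_g ≤ suppDim s_{g₁} + suppDim s_{g₂} coordinatewise; in particular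
suppDim s_g ≤ suppDim s_{g₁} + suppDim s_{g₂}, with strict inequality in some coordinate
whenever g ≠ g₁ + g₂.
-/
lemma pstarN_add (n m : {i // i ∈ Iuf} → ℕ) :
    pstarN Iuf Bt (n + m) = pstarN Iuf Bt n + pstarN Iuf Bt m := by
  funext i
  simp only [pstarN, pstar, Pi.add_apply, Nat.cast_add, mul_add]
  rw [Finset.sum_add_distrib]

lemma pstarN_zero : pstarN Iuf Bt 0 = 0 := by
  funext i; simp [pstarN, pstar]

lemma pstarN_inj (hfull : Function.Injective (pstar Iuf Bt)) :
    Function.Injective (pstarN Iuf Bt) := by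
  intro n m h
  have h2 := hfull h
  funext kk
  exact_mod_cast congrFun h2 kk

theorem positive_family_local_support (hfull : Function.Injective (pstar Iuf Bt))
    (Θ : Set (I → ℤ)) (s : (I → ℤ) → LP I)
    (hs : ∀ g ∈ Θ, Pointed Iuf Bt g (s g))
    -- every s_g has nonnegative coefficients
    (hpos : ∀ g ∈ Θ, ∀ m : I → ℤ, 0 ≤ coeff (s g) m)
    -- a finite decomposition of s_{g₁}·s_{g₂} with nonnegative coefficients b
    (g₁ g₂ : I → ℤ) (hg₁ : g₁ ∈ Θ) (hg₂ : g₂ ∈ Θ)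
    (b : (I → ℤ) →₀ ℤ) (hbΘ : (b.support : Set (I → ℤ)) ⊆ Θ) (hbpos : ∀ g, 0 ≤ b g)
    (hdec : s g₁ * s g₂ = b.sum fun g a => a • s g) :
    ∀ g, b g ≠ 0 →
      -- (i) local support
      (suppz Iuf Bt g (s g) ⊆ suppz Iuf Bt g₁ (s g₁) ∪ suppz Iuf Bt g₂ (s g₂)) ∧
      -- (ii) there is a unique n₀ with g = g₁ + g₂ + p*(n₀) ...
      (∃! n₀ : {i // i ∈ Iuf} → ℕ, g = g₁ + g₂ + pstarN Iuf Bt n₀) ∧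
      -- ... and n₀ + suppDim s_g ≤ suppDim s_{g₁} + suppDim s_{g₂} coordinatewise
      (∀ n₀ : {i // i ∈ Iuf} → ℕ, g = g₁ + g₂ + pstarN Iuf Bt n₀ →
        ∀ kk : {i // i ∈ Iuf}, n₀ kk + suppDim Iuf Bt g (s g) kk ≤
          suppDim Iuf Bt g₁ (s g₁) kk + suppDim Iuf Bt g₂ (s g₂) kk) ∧
      -- in particular suppDim s_g ≤ suppDim s_{g₁} + suppDim s_{g₂}, ...
      (∀ kk : {i // i ∈ Iuf}, suppDim Iuf Bt g (s g) kk ≤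
        suppDim Iuf Bt g₁ (s g₁) kk + suppDim Iuf Bt g₂ (s g₂) kk) ∧
      -- ... strictly in some coordinate whenever g ≠ g₁ + g₂
      (g ≠ g₁ + g₂ → ∃ kk : {i // i ∈ Iuf}, suppDim Iuf Bt g (s g) kk <
        suppDim Iuf Bt g₁ (s g₁) kk + suppDim Iuf Bt g₂ (s g₂) kk) := by
  intro g hbg
  have hgΘ : g ∈ Θ := hbΘ (Finsupp.mem_support_iff.mpr hbg)
  have hinj := pstarN_inj Iuf Bt hfull
  -- coefficient formula for the product
  have hcoeff : ∀ e, coeff (s g₁ * s g₂) e = ∑ g' ∈ b.support, b g' * coeff (s g') e := by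
    intro e
    rw [hdec, Finsupp.sum, coeff, AddMonoidAlgebra.coeff_sum, Finsupp.finset_sum_apply]
    refine Finset.sum_congr rfl fun g' _ => ?_
    rw [AddMonoidAlgebra.coeff_smul, Finsupp.smul_apply, smul_eq_mul]
    rfl
  -- support of s g is contained in the support of the product
  have h1 : ∀ e, coeff (s g) e ≠ 0 → coeff (s g₁ * s g₂) e ≠ 0 := by
    intro e he
    have hge : 0 < coeff (s g) e := lt_of_le_of_ne (hpos g hgΘ e) (Ne.symm he)
    have hbg' : 0 < b g := lt_of_le_of_ne (hbpos g) (Ne.symm hbg)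
    have hmem : g ∈ b.support := Finsupp.mem_support_iff.mpr hbg
    have hlt : 0 < ∑ g' ∈ b.support, b g' * coeff (s g') e := by
      refine lt_of_lt_of_le (mul_pos hbg' hge) ?_
      exact Finset.single_le_sum
        (fun g' hg' => mul_nonneg (hbpos g') (hpos g' (hbΘ hg') e)) hmem
    rw [hcoeff e]; exact hlt.ne'
  -- decomposition of exponents
  have h2 : ∀ n, coeff (s g) (g + pstarN Iuf Bt n) ≠ 0 →
      ∃ n₁ n₂, coeff (s g₁) (g₁ + pstarN Iuf Bt n₁) ≠ 0 ∧
        coeff (s g₂) (g₂ + pstarN Iuf Bt n₂) ≠ 0 ∧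
        g + pstarN Iuf Bt n = g₁ + g₂ + pstarN Iuf Bt (n₁ + n₂) := by
    intro n hn
    have hmem : g + pstarN Iuf Bt n ∈ (s g₁ * s g₂).coeff.support :=
      Finsupp.mem_support_iff.mpr (h1 _ hn)
    have hmem2 := AddMonoidAlgebra.support_coeff_mul_subset (s g₁) (s g₂) hmem
    rw [Finset.mem_add] at hmem2
    obtain ⟨e₁, he₁, e₂, he₂, heq⟩ := hmem2
    obtain ⟨n₁, rfl⟩ := (hs g₁ hg₁).2 e₁ he₁
    obtain ⟨n₂, rfl⟩ := (hs g₂ hg₂).2 e₂ he₂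
    refine ⟨n₁, n₂, Finsupp.mem_support_iff.mp he₁, Finsupp.mem_support_iff.mp he₂, ?_⟩
    rw [← heq, pstarN_add]
    abel
  -- existence of n₀
  have hc0 : coeff (s g) (g + pstarN Iuf Bt 0) ≠ 0 := by
    rw [pstarN_zero, add_zero, (hs g hgΘ).1]; exact one_ne_zero
  obtain ⟨na, nb, _, _, hgeq⟩ := h2 0 hc0
  rw [pstarN_zero, add_zero] at hgeq
  -- key step: relating any n in the support with a decomposition
  have hE : ∀ n₀', g = g₁ + g₂ + pstarN Iuf Bt n₀' →
      ∀ n, coeff (s g) (g + pstarN Iuf Bt n) ≠ 0 →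
      ∃ n₁ n₂, coeff (s g₁) (g₁ + pstarN Iuf Bt n₁) ≠ 0 ∧
        coeff (s g₂) (g₂ + pstarN Iuf Bt n₂) ≠ 0 ∧ n₀' + n = n₁ + n₂ := by
    intro n₀' hg0 n hn
    obtain ⟨n₁, n₂, ha, hb', heq⟩ := h2 n hn
    refine ⟨n₁, n₂, ha, hb', hinj ?_⟩
    rw [pstarN_add, pstarN_add]
    have h3 := heq
    rw [hg0, pstarN_add] at h3
    have h4 : g₁ + g₂ + (pstarN Iuf Bt n₀' + pstarN Iuf Bt n)
        = g₁ + g₂ + (pstarN Iuf Bt n₁ + pstarN Iuf Bt n₂) := by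
      rw [← add_assoc]; exact h3
    exact add_left_cancel h4
  -- finiteness of the support sets
  have hfin : ∀ g' : I → ℤ,
      {n : {i // i ∈ Iuf} → ℕ | coeff (s g') (g' + pstarN Iuf Bt n) ≠ 0}.Finite := by
    intro g'
    have hset : {n : {i // i ∈ Iuf} → ℕ | coeff (s g') (g' + pstarN Iuf Bt n) ≠ 0}
        = (fun n => g' + pstarN Iuf Bt n) ⁻¹' ((s g').coeff.support : Set (I → ℤ)) := by
      ext n; simp [coeff, Finsupp.mem_support_iff]
    rw [hset]
    exact Set.Finite.preimage ((add_right_injective g').comp hinj).injOn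
      (Finset.finite_toSet _)
  have hbdd : ∀ (g' : I → ℤ) (kk : {i // i ∈ Iuf}),
      BddAbove {d : ℕ | ∃ n : {i // i ∈ Iuf} → ℕ,
        coeff (s g') (g' + pstarN Iuf Bt n) ≠ 0 ∧ n kk = d} := by
    intro g' kk
    have hset : {d : ℕ | ∃ n : {i // i ∈ Iuf} → ℕ,
          coeff (s g') (g' + pstarN Iuf Bt n) ≠ 0 ∧ n kk = d}
        = (fun n => n kk) '' {n | coeff (s g') (g' + pstarN Iuf Bt n) ≠ 0} := by
      ext d; simp [Set.mem_image]
    rw [hset]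
    exact ((hfin g').image _).bddAbove
  have hne0 : ∀ g' ∈ Θ, ∀ kk : {i // i ∈ Iuf}, (0 : ℕ) ∈ {d : ℕ | ∃ n : {i // i ∈ Iuf} → ℕ,
      coeff (s g') (g' + pstarN Iuf Bt n) ≠ 0 ∧ n kk = d} := by
    intro g' hg' kk
    exact ⟨0, by rw [pstarN_zero, add_zero, (hs g' hg').1]; exact one_ne_zero, rfl⟩
  -- main coordinatewise bound
  have hmain : ∀ n₀', g = g₁ + g₂ + pstarN Iuf Bt n₀' →
      ∀ kk : {i // i ∈ Iuf}, n₀' kk + suppDim Iuf Bt g (s g) kk ≤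
        suppDim Iuf Bt g₁ (s g₁) kk + suppDim Iuf Bt g₂ (s g₂) kk := by
    intro n₀' hg0 kk
    obtain ⟨n, hn, hnkk⟩ := Nat.sSup_mem ⟨0, hne0 g hgΘ kk⟩ (hbdd g kk)
    obtain ⟨n₁, n₂, ha, hb', hsum⟩ := hE n₀' hg0 n hn
    have e1 : n₁ kk ≤ suppDim Iuf Bt g₁ (s g₁) kk :=
      le_csSup (hbdd g₁ kk) ⟨n₁, ha, rfl⟩
    have e2 : n₂ kk ≤ suppDim Iuf Bt g₂ (s g₂) kk :=
      le_csSup (hbdd g₂ kk) ⟨n₂, hb', rfl⟩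
    have hsk : n₀' kk + n kk = n₁ kk + n₂ kk := congrFun hsum kk
    have hdg : suppDim Iuf Bt g (s g) kk = n kk := hnkk.symm
    rw [hdg, hsk]
    exact add_le_add e1 e2
  refine ⟨?_, ⟨na + nb, hgeq, ?_⟩, hmain, ?_, ?_⟩
  · -- (i) local support
    intro i hi
    rw [suppz, Set.mem_iUnion₂] at hi
    obtain ⟨n, hn, hin⟩ := hi
    obtain ⟨hiI, hnne⟩ := hin
    obtain ⟨n₁, n₂, ha, hb', hsum⟩ := hE (na + nb) hgeq n hn
    have hsk := congrFun hsum ⟨i, hiI⟩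
    simp only [Pi.add_apply] at hsk
    by_cases h12 : n₁ ⟨i, hiI⟩ = 0
    · right
      rw [suppz, Set.mem_iUnion₂]
      have hn2 : n₂ ⟨i, hiI⟩ ≠ 0 := by omega
      exact ⟨n₂, hb', hiI, hn2⟩
    · left
      rw [suppz, Set.mem_iUnion₂]
      exact ⟨n₁, ha, hiI, h12⟩
  · -- uniqueness of n₀
    intro m hm
    refine hinj (add_left_cancel (a := g₁ + g₂) ?_)
    rw [← hm, ← hgeq]
  · -- (iii)
    intro kk
    have := hmain (na + nb) hgeq kk
    omega
  · -- (iv) strict inequality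
    intro hne
    have hn0 : na + nb ≠ 0 := by
      intro h0
      apply hne
      rw [hgeq, h0, pstarN_zero, add_zero]
    obtain ⟨kk, hkk⟩ := Function.ne_iff.mp hn0
    refine ⟨kk, ?_⟩
    have := hmain (na + nb) hgeq kk
    have hpos' : (na + nb) kk ≠ 0 := hkk
    omega

end CAFreeze
end
end

section
/- Let Θ ⊆ ℤ^I and let S = {s_g : g∈Θ} and Z = {z_g : g∈Θ} be Θ-pointed families. Assume: (i) for every g ∈ Θ there are finite decompositions s_g = Σ_{g'∈Θ} b_{g,g'}·z_{g'} and z_g = Σ_{g'∈Θ} c_{g,g'}·s_{g'} with integer coefficients, almost all zero; (ii) these transitions are local: supp z_{g'} ⊆ supp s_g whenever b_{g,g'} ≠ 0, and supp s_{g'} ⊆ supp z_g whenever c_{g,g'} ≠ 0; (iii) Z has local support under multiplication: for all g₁, g₂ ∈ Θ there is a finite decomposition z_{g₁}·z_{g₂} = Σ_{g∈Θ} α^g·z_g with integer coefficients such that supp z_g ⊆ supp z_{g₁} ∪ supp z_{g₂} whenever α^g ≠ 0. Then S has local support under multiplication: for all g₁, g₂ ∈ Θ there is a (necessarily unique) finite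 decomposition s_{g₁}·s_{g₂} = Σ_{g∈Θ} β^g·s_g with integer coefficients such that supp s_g ⊆ supp s_{g₁} ∪ supp s_{g₂} whenever β^g ≠ 0. -/
/-! Common setup. -/

noncomputable section

namespace CAFreeze

variable {I : Type*} [Fintype I] [DecidableEq I]

variable (Iuf : Finset I) (Bt : I → {i // i ∈ Iuf} → ℤ)

/-!
STATEMENT 12: Let Θ ⊆ ℤ^I and let S = {s_g} and Z = {z_g} be Θ-pointed families. Assume:
(i) for every g ∈ Θ there are finite decompositions s_g = Σ b_{g,g'}·z_{g'} and
z_g = Σ c_{g,g'}·s_{g'}; (ii) these transitions are local: supp z_{g'} ⊆ supp s_g whenever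
b_{g,g'} ≠ 0, and supp s_{g'} ⊆ supp z_g whenever c_{g,g'} ≠ 0; (iii) Z has local support
under multiplication. Then S has local support under multiplication: for all g₁, g₂ ∈ Θ
there is a (necessarily unique) finite decomposition s_{g₁}·s_{g₂} = Σ_{g∈Θ} β^g·s_g with
integer coefficients such that supp s_g ⊆ supp s_{g₁} ∪ supp s_{g₂} whenever β^g ≠ 0.
-/
theorem local_transition_local_support (hfull : Function.Injective (pstar Iuf Bt))
    (Θ : Set (I → ℤ)) (s z : (I → ℤ) → LP I)
    (hs : ∀ g ∈ Θ, Pointed Iuf Bt g (s g))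
    (hz : ∀ g ∈ Θ, Pointed Iuf Bt g (z g))
    -- (i) + (ii): finite local transition from S to Z
    (hSZ : ∀ g ∈ Θ, ∃ b : (I → ℤ) →₀ ℤ, (b.support : Set (I → ℤ)) ⊆ Θ ∧
      s g = (b.sum fun g' a => a • z g') ∧
      ∀ g', b g' ≠ 0 → suppz Iuf Bt g' (z g') ⊆ suppz Iuf Bt g (s g))
    -- (i) + (ii): finite local transition from Z to S
    (hZS : ∀ g ∈ Θ, ∃ c : (I → ℤ) →₀ ℤ, (c.support : Set (I → ℤ)) ⊆ Θ ∧
      z g = (c.sum fun g' a => a • s g') ∧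
      ∀ g', c g' ≠ 0 → suppz Iuf Bt g' (s g') ⊆ suppz Iuf Bt g (z g))
    -- (iii): Z has local support under multiplication
    (hZmul : ∀ g₁ ∈ Θ, ∀ g₂ ∈ Θ, ∃ α : (I → ℤ) →₀ ℤ, (α.support : Set (I → ℤ)) ⊆ Θ ∧
      z g₁ * z g₂ = (α.sum fun g a => a • z g) ∧
      ∀ g, α g ≠ 0 → suppz Iuf Bt g (z g) ⊆ suppz Iuf Bt g₁ (z g₁) ∪ suppz Iuf Bt g₂ (z g₂)) :
    -- S has local support under multiplication
    ∀ g₁ ∈ Θ, ∀ g₂ ∈ Θ, ∃ β : (I → ℤ) →₀ ℤ, (β.support : Set (I → ℤ)) ⊆ Θ ∧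
      s g₁ * s g₂ = (β.sum fun g a => a • s g) ∧
      ∀ g, β g ≠ 0 →
        suppz Iuf Bt g (s g) ⊆ suppz Iuf Bt g₁ (s g₁) ∪ suppz Iuf Bt g₂ (s g₂) := by
  classical
  intro g₁ hg₁ g₂ hg₂
  obtain ⟨b₁, hb₁Θ, hb₁eq, hb₁loc⟩ := hSZ g₁ hg₁
  obtain ⟨b₂, hb₂Θ, hb₂eq, hb₂loc⟩ := hSZ g₂ hg₂
  choose! α hαΘ hαeq hαloc using hZmul
  choose! c hcΘ hceq hcloc using hZS
  set γ : (I → ℤ) → (I → ℤ) → ((I → ℤ) →₀ ℤ) :=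
    fun p q => (α p q).sum fun r a => a • c r with hγdef
  set β : (I → ℤ) →₀ ℤ :=
    b₁.sum fun p a₁ => a₁ • (b₂.sum fun q a₂ => a₂ • γ p q) with hβdef
  -- key structural fact about nonzero coefficients of β
  have key : ∀ g, β g ≠ 0 → ∃ p ∈ b₁.support, ∃ q ∈ b₂.support,
      ∃ r ∈ (α p q).support, (c r) g ≠ 0 := by
    intro g hg
    rw [hβdef, Finsupp.sum_apply] at hg
    obtain ⟨p, hp, hp0⟩ := Finset.exists_ne_zero_of_sum_ne_zero hg
    refine ⟨p, hp, ?_⟩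
    simp only [Finsupp.smul_apply, smul_eq_mul] at hp0
    have hp1 : (b₂.sum fun q a₂ => a₂ • γ p q) g ≠ 0 := right_ne_zero_of_mul hp0
    rw [Finsupp.sum_apply] at hp1
    obtain ⟨q, hq, hq0⟩ := Finset.exists_ne_zero_of_sum_ne_zero hp1
    refine ⟨q, hq, ?_⟩
    simp only [Finsupp.smul_apply, smul_eq_mul] at hq0
    have hq1 : (γ p q) g ≠ 0 := right_ne_zero_of_mul hq0
    simp only [hγdef, Finsupp.sum_apply, Finsupp.smul_apply, smul_eq_mul] at hq1
    obtain ⟨r, hr, hr0⟩ := Finset.exists_ne_zero_of_sum_ne_zero hq1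
    exact ⟨r, hr, right_ne_zero_of_mul hr0⟩
  refine ⟨β, ?_, ?_, ?_⟩
  · -- support of β lies in Θ
    intro g hg
    obtain ⟨p, hp, q, hq, r, hr, hcg⟩ := key g (Finsupp.mem_support_iff.mp hg)
    have hpΘ : p ∈ Θ := hb₁Θ hp
    have hqΘ : q ∈ Θ := hb₂Θ hq
    have hrΘ : r ∈ Θ := hαΘ p hpΘ q hqΘ hr
    exact hcΘ r hrΘ (Finsupp.mem_support_iff.mpr hcg)
  · -- the decomposition identity
    set T : ((I → ℤ) →₀ ℤ) →ₗ[ℤ] LP I := Finsupp.linearCombination ℤ s with hT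
    have hTc : ∀ r ∈ Θ, T (c r) = z r := by
      intro r hr
      rw [hT, Finsupp.linearCombination_apply]
      exact (hceq r hr).symm
    have hTγ : ∀ p ∈ Θ, ∀ q ∈ Θ, T (γ p q) = z p * z q := by
      intro p hp q hq
      rw [hγdef, map_finsuppSum, hαeq p hp q hq]
      refine Finsupp.sum_congr fun r hr => ?_
      rw [map_smul, hTc r (hαΘ p hp q hq hr)]
    have : T β = s g₁ * s g₂ := by
      rw [hβdef, map_finsuppSum, hb₁eq, hb₂eq, Finsupp.sum_mul]
      refine Finsupp.sum_congr fun p hp => ?_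
      rw [map_smul, smul_mul_assoc]
      congr 1
      rw [map_finsuppSum, Finsupp.mul_sum]
      refine Finsupp.sum_congr fun q hq => ?_
      rw [map_smul, hTγ p (hb₁Θ hp) q (hb₂Θ hq)]
      exact (mul_smul_comm _ _ _).symm
    rw [← this, hT, Finsupp.linearCombination_apply]
  · -- locality of supports
    intro g hg
    obtain ⟨p, hp, q, hq, r, hr, hcg⟩ := key g hg
    have hpΘ : p ∈ Θ := hb₁Θ hp
    have hqΘ : q ∈ Θ := hb₂Θ hq
    have hrΘ : r ∈ Θ := hαΘ p hpΘ q hqΘ hr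
    have h1 : suppz Iuf Bt g (s g) ⊆ suppz Iuf Bt r (z r) := hcloc r hrΘ g hcg
    have h2 : suppz Iuf Bt r (z r) ⊆ suppz Iuf Bt p (z p) ∪ suppz Iuf Bt q (z q) :=
      hαloc p hpΘ q hqΘ r (Finsupp.mem_support_iff.mp hr)
    have h3 : suppz Iuf Bt p (z p) ⊆ suppz Iuf Bt g₁ (s g₁) :=
      hb₁loc p (Finsupp.mem_support_iff.mp hp)
    have h4 : suppz Iuf Bt q (z q) ⊆ suppz Iuf Bt g₂ (s g₂) :=
      hb₂loc q (Finsupp.mem_support_iff.mp hq)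
    exact h1.trans (h2.trans (Set.union_subset_union h3 h4))

end CAFreeze
end
end
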